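/- Let 1<p<∞ and let μ be a positive finite Borel measure on the closed unit disk such that for some C₂>0, ∫_{closed 𝔻} |K_λ|^p dμ ≥ C₂ for every λ in the open unit disk. Then there exists c>0 (depending only on p and C₂) such that for every arc I of the unit circle and every 0<h≤|I|, ∫_{closed 𝔻} φ_h(z) dμ(z) ≥ c·|I|, where φ_h(z) = (1/h)∫_{S_{I,h}} (1−|λ|²)^{p−1}/|1−conj(λ)z|^p dA(λ) and dA is planar area measure. -/

import Mathlib

open MeasureTheory Complex Set Metric

noncomputable section

/-- The `p`-th power mean of `f` on the circle of radius `r` (normalized by `2π`). -/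
def hIntegral (p : ℝ) (f : ℂ → ℂ) (r : ℝ) : ℝ :=
  (1 / (2 * Real.pi)) *
    ∫ θ in (0:ℝ)..(2 * Real.pi), ‖f ((r : ℂ) * Complex.exp (θ * Complex.I))‖ ^ p

/-- `‖f‖_p ^ p`, the `p`-th power of the Hardy space `H^p` norm. -/
def hNormPow (p : ℝ) (f : ℂ → ℂ) : ℝ := sSup (hIntegral p f '' Ioo (0:ℝ) 1)

/-- The Hardy space `H^p` norm. -/
def hNorm (p : ℝ) (f : ℂ → ℂ) : ℝ := hNormPow p f ^ (1 / p)

/-- `f` has finite `H^p` norm. -/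
def HpFinite (p : ℝ) (f : ℂ → ℂ) : Prop := BddAbove (hIntegral p f '' Ioo (0:ℝ) 1)

/-- The `H^p` reproducing kernel `k_λ(z) = 1/(1 - conj(λ) z)`. -/
def hker (l : ℂ) : ℂ → ℂ := fun z => 1 / (1 - (starRingEnd ℂ) l * z)

/-- The normalized reproducing kernel `K_λ = k_λ / ‖k_λ‖_p`. -/
def hkerN (p : ℝ) (l : ℂ) : ℂ → ℂ := fun z => hker l z / (hNorm p (hker l) : ℂ)

/-- The arc of the unit circle starting at angle `a` of normalized length `ℓ`. -/
def cArc (a ℓ : ℝ) : Set ℂ :=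
  (fun θ : ℝ => Complex.exp (θ * Complex.I)) '' Ico a (a + 2 * Real.pi * ℓ)

/-- The modified Carleson window `S_{I,h}` over the arc of normalized length `ℓ`
starting at angle `a`, with radial depth `h`. -/
def cWindowH (a ℓ h : ℝ) : Set ℂ :=
  {z : ℂ | 1 - h ≤ ‖z‖ ∧ ‖z‖ ≤ 1 ∧ z / (‖z‖ : ℂ) ∈ cArc a ℓ}

/-- The Carleson window `S_I`. -/
def cWindow (a ℓ : ℝ) : Set ℂ := cWindowH a ℓ ℓ

/-- Normalized Lebesgue (arclength over `2π`) measure on the unit circle `∂𝔻`. -/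
def circM : Measure ℂ :=
  (ENNReal.ofReal (1 / (2 * Real.pi))) •
    Measure.map (fun θ : ℝ => Complex.exp (θ * Complex.I))
      (volume.restrict (Ico (0:ℝ) (2 * Real.pi)))

end

noncomputable section
/-- `φ_h(z) = (1/h) ∫_{S_{I,h}} (1-|λ|²)^{p-1} / |1 - conj(λ) z|^p dA(λ)`, where `dA` is
planar area (Lebesgue) measure and `I` is the arc at angle `a` of normalized length `ℓ`. -/
def cPhi (p a ℓ h : ℝ) (z : ℂ) : ℝ :=
  (1 / h) * ∫ l in cWindowH a ℓ h,
    (1 - ‖l‖ ^ 2) ^ (p - 1) / ‖1 - (starRingEnd ℂ) l * z‖ ^ p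
end

section auxlemmas

section lemmas

lemma normSq_one_sub_conj (l z : ℂ) :
    Complex.normSq (1 - (starRingEnd ℂ) l * z)
      = Complex.normSq (z - l) + (1 - Complex.normSq l) * (1 - Complex.normSq z) := by
  simp only [Complex.normSq_apply, Complex.sub_re, Complex.sub_im, Complex.mul_re, Complex.mul_im,
    Complex.conj_re, Complex.conj_im, Complex.one_re, Complex.one_im]
  ring

lemma abs_sub_le_abs_one_sub_conj {l z : ℂ} (hl : ‖l‖ ≤ 1) (hz : ‖z‖ ≤ 1) :
    ‖z - l‖ ≤ ‖1 - (starRingEnd ℂ) l * z‖ := by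
  have hl' : Complex.normSq l ≤ 1 := by
    rw [← Complex.sq_norm]; nlinarith [norm_nonneg l]
  have hz' : Complex.normSq z ≤ 1 := by
    rw [← Complex.sq_norm]; nlinarith [norm_nonneg z]
  rw [Complex.norm_def, Complex.norm_def]
  apply Real.sqrt_le_sqrt
  rw [normSq_one_sub_conj]
  nlinarith [Complex.normSq_nonneg (z - l)]

lemma one_sub_abs_le_abs_one_sub_conj (l : ℂ) {z : ℂ} (hz : ‖z‖ ≤ 1) :
    1 - ‖l‖ ≤ ‖1 - (starRingEnd ℂ) l * z‖ := by
  have h1 : ‖(starRingEnd ℂ) l * z‖ ≤ ‖l‖ := by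
    rw [norm_mul, Complex.norm_conj]
    nlinarith [norm_nonneg l, norm_nonneg z]
  have h2 : (1 : ℝ) - ‖(starRingEnd ℂ) l * z‖
      ≤ ‖1 - (starRingEnd ℂ) l * z‖ := by
    have := norm_sub_norm_le (1 : ℂ) ((starRingEnd ℂ) l * z)
    simpa using this
  linarith

lemma norm_hker (l z : ℂ) :
    ‖hker l z‖ = (‖1 - (starRingEnd ℂ) l * z‖)⁻¹ := by
  rw [hker]
  simp [map_div₀, one_div]

lemma abs_one_sub_exp_le (s : ℝ) : ‖1 - Complex.exp (s * Complex.I)‖ ≤ 2 * |s| := by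
  rcases le_or_gt (|s|) 1 with hs | hs
  · have := Complex.norm_exp_sub_one_le (x := (s : ℂ) * Complex.I) (by simpa using hs)
    rw [← norm_neg, neg_sub] at this
    simpa using this
  · calc ‖1 - Complex.exp (s * Complex.I)‖
        ≤ ‖1‖ + ‖Complex.exp (s * Complex.I)‖ := norm_sub_le _ _
      _ ≤ 2 * |s| := by
          rw [Complex.norm_exp_ofReal_mul_I, norm_one]
          linarith

lemma abs_one_sub_real_mul_exp {t s : ℝ} (h1 : t ≤ 1) :
    ‖1 - (t:ℂ) * Complex.exp (s * Complex.I)‖ ≤ (1 - t) + 2 * |s| := by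
  have key : (1 : ℂ) - (t:ℂ) * Complex.exp (s * Complex.I)
      = (1 - Complex.exp (s * Complex.I)) + ((1 : ℂ) - (t:ℂ)) * Complex.exp (s * Complex.I) := by
    ring
  rw [key]
  calc ‖_‖ ≤ ‖1 - Complex.exp (s * Complex.I)‖
        + ‖((1 : ℂ) - (t:ℂ)) * Complex.exp (s * Complex.I)‖ := norm_add_le _ _
    _ ≤ 2 * |s| + (1 - t) := by
        gcongr
        · exact abs_one_sub_exp_le s
        · rw [norm_mul, Complex.norm_exp_ofReal_mul_I, mul_one]
          have : ((1 : ℂ) - (t:ℂ)) = ((1 - t : ℝ) : ℂ) := by push_cast; ring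
          rw [this, Complex.norm_real, Real.norm_eq_abs, _root_.abs_of_nonneg (by linarith : (0:ℝ) ≤ 1 - t)]
    _ = (1 - t) + 2 * |s| := by ring

lemma conj_decomp (l : ℂ) :
    (starRingEnd ℂ) l = (‖l‖ : ℂ) * Complex.exp (-(l.arg : ℂ) * Complex.I) := by
  conv_lhs => rw [← Complex.norm_mul_exp_arg_mul_I l]
  rw [map_mul, Complex.conj_ofReal, ← Complex.exp_conj]
  congr 1
  simp [Complex.conj_I]

end lemmas

lemma hIntegral_hker_ge {p : ℝ} (hp : 1 < p) {l : ℂ} (hl : ‖l‖ < 1) :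
    (2 * Real.pi)⁻¹ * (4:ℝ) ^ (-p) * (1 - ‖l‖) ^ (1 - p)
      ≤ hIntegral p (hker l) ((1 + ‖l‖) / 2) := by
  have hpi := Real.pi_gt_three
  set al := ‖l‖ with hal
  have hal0 : 0 ≤ al := norm_nonneg l
  set δ : ℝ := 1 - al with hδdef
  have hδ0 : 0 < δ := by simp [hδdef]; linarith
  have hδ1 : δ ≤ 1 := by simp [hδdef]; linarith
  set r : ℝ := (1 + al) / 2 with hrdef
  have hr0 : 0 < r := by simp [hrdef]; linarith
  have hr1 : r < 1 := by simp [hrdef]; linarith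
  have halr : al * r ≤ 1 := by nlinarith
  have halr' : 1 - al * r ≤ 3 / 2 * δ := by simp [hrdef, hδdef]; nlinarith
  -- the function
  set f : ℝ → ℝ := fun θ => ‖hker l ((r : ℂ) * Complex.exp (θ * Complex.I))‖ ^ p with hfdef
  have hf_nonneg : ∀ θ, 0 ≤ f θ := fun θ => by
    rw [hfdef]; positivity
  have hne : ∀ θ : ℝ, (1 : ℂ) - (starRingEnd ℂ) l * ((r : ℂ) * Complex.exp (θ * Complex.I)) ≠ 0 := by
    intro θ hzero
    have h1 : ‖(r : ℂ) * Complex.exp (θ * Complex.I)‖ = r := by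
      rw [norm_mul, Complex.norm_exp_ofReal_mul_I, Complex.norm_real, Real.norm_eq_abs, mul_one,
        _root_.abs_of_nonneg hr0.le]
    have := one_sub_abs_le_abs_one_sub_conj l (z := (r : ℂ) * Complex.exp (θ * Complex.I))
      (by rw [h1]; exact hr1.le)
    rw [hzero] at this
    simp at this
    linarith
  have hf_cont : Continuous f := by
    rw [hfdef]
    apply Continuous.rpow_const
    · apply Continuous.norm
      unfold hker
      apply Continuous.div continuous_const
      · fun_prop
      · intro θ; exact hne θ
    · intro θ; right; linarith
  -- pointwise bound on a good interval
  set α := l.arg with hαdef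
  have hα1 : α ≤ Real.pi := Complex.arg_le_pi l
  have hα2 : -Real.pi < α := Complex.neg_pi_lt_arg l
  -- choose u
  obtain ⟨u, hu0, hu2π, hbound⟩ :
      ∃ u : ℝ, 0 ≤ u ∧ u + δ ≤ 2 * Real.pi ∧
        ∀ θ ∈ Set.Icc u (u + δ), ((4 * δ)⁻¹) ^ p ≤ f θ := by
    have key : ∀ θ : ℝ, ∀ s : ℝ, |s| ≤ δ →
        Complex.exp ((θ : ℂ) * Complex.I - (α : ℂ) * Complex.I) = Complex.exp ((s : ℂ) * Complex.I) →
        ((4 * δ)⁻¹) ^ p ≤ f θ := by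
      intro θ s hs hexp
      have habs : ‖1 - (starRingEnd ℂ) l * ((r : ℂ) * Complex.exp (θ * Complex.I))‖
          ≤ 4 * δ := by
        have hdecomp : (starRingEnd ℂ) l * ((r : ℂ) * Complex.exp (θ * Complex.I))
            = ((al * r : ℝ) : ℂ) * Complex.exp ((s:ℝ) * Complex.I) := by
          rw [conj_decomp l, ← hαdef, ← hal]
          rw [← hexp]
          push_cast
          rw [show ((θ:ℂ) * Complex.I - (α:ℂ) * Complex.I) = -(α:ℂ)*Complex.I + (θ:ℂ)*Complex.I by ring,
            Complex.exp_add]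
          ring
        rw [hdecomp]
        calc ‖1 - ((al * r : ℝ) : ℂ) * Complex.exp ((s:ℝ) * Complex.I)‖
            ≤ (1 - al * r) + 2 * |s| := abs_one_sub_real_mul_exp halr
          _ ≤ 3 / 2 * δ + 2 * δ := by gcongr
          _ ≤ 4 * δ := by linarith
      have hDpos : 0 < ‖1 - (starRingEnd ℂ) l * ((r : ℂ) * Complex.exp (θ * Complex.I))‖ :=
        norm_pos_iff.mpr (hne θ)
      rw [hfdef]
      simp only
      rw [norm_hker]
      apply Real.rpow_le_rpow (by positivity) _ (by linarith)
      exact inv_anti₀ hDpos habs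
    rcases le_or_gt 0 α with hα | hα
    · refine ⟨α, hα, by linarith, fun θ hθ => ?_⟩
      apply key θ (θ - α) (by rw [_root_.abs_of_nonneg (by linarith [hθ.1])]; linarith [hθ.2])
      push_cast
      ring_nf
    · refine ⟨2 * Real.pi + α - δ, by linarith, by linarith, fun θ hθ => ?_⟩
      apply key θ (θ - α - 2 * Real.pi)
      · rw [_root_.abs_of_nonpos (by linarith [hθ.2])]; linarith [hθ.1]
      · have : ((θ : ℂ)) * Complex.I - (α : ℂ) * Complex.I
            = ((θ - α - 2 * Real.pi : ℝ) : ℂ) * Complex.I + ((2 * Real.pi : ℝ) : ℂ) * Complex.I := by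
          push_cast; ring
        rw [this, Complex.exp_add,
          show ((2 * Real.pi : ℝ) : ℂ) * Complex.I = 2 * (Real.pi : ℂ) * Complex.I by push_cast; ring,
          Complex.exp_two_pi_mul_I, mul_one]
  -- integral bound
  have h2π : (0:ℝ) < 2 * Real.pi := by linarith
  have hii : IntervalIntegrable f volume 0 (2 * Real.pi) := hf_cont.intervalIntegrable _ _
  have step1 : δ * ((4 * δ)⁻¹) ^ p ≤ ∫ θ in u..(u + δ), f θ := by
    have : ∫ θ in u..(u + δ), ((4 * δ)⁻¹) ^ p = δ * ((4 * δ)⁻¹) ^ p := by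
      rw [intervalIntegral.integral_const]
      simp [smul_eq_mul]
    rw [← this]
    apply intervalIntegral.integral_mono_on (by linarith)
      (intervalIntegrable_const) (hf_cont.intervalIntegrable _ _)
    exact hbound
  have step2 : ∫ θ in u..(u + δ), f θ ≤ ∫ θ in (0:ℝ)..(2 * Real.pi), f θ := by
    apply intervalIntegral.integral_mono_interval hu0 (by linarith) hu2π
    · filter_upwards with θ using hf_nonneg θ
    · exact hii
  have hrw : δ * ((4 * δ)⁻¹) ^ p = (4:ℝ) ^ (-p) * δ ^ (1 - p) := by
    rw [Real.inv_rpow (by positivity), Real.mul_rpow (by norm_num) hδ0.le, mul_inv,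
      Real.rpow_neg (by norm_num : (0:ℝ) ≤ 4),
      show (1:ℝ) - p = 1 + (-p) by ring, Real.rpow_add hδ0, Real.rpow_one, Real.rpow_neg hδ0.le]
    ring
  rw [hIntegral]
  calc (2 * Real.pi)⁻¹ * (4:ℝ) ^ (-p) * (1 - al) ^ (1 - p)
      = (1 / (2 * Real.pi)) * (δ * ((4 * δ)⁻¹) ^ p) := by rw [hrw, ← hδdef]; ring
    _ ≤ (1 / (2 * Real.pi)) * ∫ θ in (0:ℝ)..(2 * Real.pi), f θ := by
        apply mul_le_mul_of_nonneg_left (le_trans step1 step2) (by positivity)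

lemma lintegral_hker_ge {p : ℝ} (hp : 1 < p) (μ : Measure ℂ) {C₂ : ℝ} (hC₂ : 0 < C₂)
    (hyp : ∀ l ∈ ball (0:ℂ) 1,
      ENNReal.ofReal C₂ ≤ ∫⁻ z, ENNReal.ofReal (‖hkerN p l z‖ ^ p) ∂μ)
    {l : ℂ} (hl : ‖l‖ < 1) :
    ENNReal.ofReal (C₂ * ((2 * Real.pi)⁻¹ * (4:ℝ) ^ (-p) * (1 - ‖l‖) ^ (1 - p)))
      ≤ ∫⁻ z, ENNReal.ofReal (‖hker l z‖ ^ p) ∂μ := by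
  have hlb : l ∈ ball (0:ℂ) 1 := by
    rw [mem_ball_zero_iff]; exact hl
  have hp0 : (0:ℝ) < p := by linarith
  set Q := hNormPow p (hker l) with hQdef
  by_cases hbdd : BddAbove (hIntegral p (hker l) '' Ioo (0:ℝ) 1)
  · -- bounded case
    have hal0 : 0 ≤ ‖l‖ := norm_nonneg l
    have hrmem : (1 + ‖l‖) / 2 ∈ Ioo (0:ℝ) 1 := ⟨by linarith, by linarith⟩
    have hQge : (2 * Real.pi)⁻¹ * (4:ℝ) ^ (-p) * (1 - ‖l‖) ^ (1 - p) ≤ Q :=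
      le_trans (hIntegral_hker_ge hp hl) (le_csSup hbdd (mem_image_of_mem _ hrmem))
    have hcp : (0:ℝ) < (2 * Real.pi)⁻¹ * (4:ℝ) ^ (-p) * (1 - ‖l‖) ^ (1 - p) := by
      have hπ : (0:ℝ) < Real.pi := Real.pi_pos
      have h1l : (0:ℝ) < 1 - ‖l‖ := by linarith
      positivity
    have hQpos : 0 < Q := lt_of_lt_of_le hcp hQge
    have hNval : hNorm p (hker l) = Q ^ (1/p) := rfl
    have hkey : ∀ z : ℂ, ‖hkerN p l z‖ ^ p = ‖hker l z‖ ^ p / Q := by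
      intro z
      simp only [hkerN]
      rw [norm_div, Complex.norm_real, Real.norm_eq_abs, hNval,
        _root_.abs_of_nonneg (Real.rpow_nonneg hQpos.le _)]
      rw [Real.div_rpow (norm_nonneg _) (Real.rpow_nonneg hQpos.le _)]
      congr 1
      rw [← Real.rpow_mul hQpos.le, one_div, inv_mul_cancel₀ hp0.ne', Real.rpow_one]
    have h1 : ∀ z : ℂ, ENNReal.ofReal (‖hkerN p l z‖ ^ p)
        = ENNReal.ofReal (‖hker l z‖ ^ p) * (ENNReal.ofReal Q)⁻¹ := by
      intro z
      rw [hkey z, ENNReal.ofReal_div_of_pos hQpos, ENNReal.div_eq_inv_mul, mul_comm]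
    have hQne : ENNReal.ofReal Q ≠ 0 := (ENNReal.ofReal_pos.mpr hQpos).ne'
    have h2 := hyp l hlb
    rw [lintegral_congr_ae (Filter.Eventually.of_forall h1),
      lintegral_mul_const' _ _ (ENNReal.inv_ne_top.mpr hQne), ← div_eq_mul_inv] at h2
    rw [ENNReal.le_div_iff_mul_le (Or.inl hQne) (Or.inl ENNReal.ofReal_ne_top)] at h2
    calc ENNReal.ofReal (C₂ * ((2 * Real.pi)⁻¹ * (4:ℝ) ^ (-p) * (1 - ‖l‖) ^ (1 - p)))
        ≤ ENNReal.ofReal (C₂ * Q) := ENNReal.ofReal_le_ofReal (by nlinarith)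
      _ = ENNReal.ofReal C₂ * ENNReal.ofReal Q := ENNReal.ofReal_mul hC₂.le
      _ ≤ _ := h2
  · -- unbounded case: contradiction
    exfalso
    have hQ0 : Q = 0 := Real.sSup_of_not_bddAbove hbdd
    have hN0 : hNorm p (hker l) = 0 := by
      rw [hNorm, ← hQdef, hQ0, Real.zero_rpow (by positivity)]
    have h0 : ∀ z : ℂ, hkerN p l z = 0 := by
      intro z
      rw [hkerN]
      simp [hN0]
    have h2 := hyp l hlb
    simp only [h0, norm_zero, Real.zero_rpow hp0.ne', ENNReal.ofReal_zero, lintegral_zero,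
      nonpos_iff_eq_zero] at h2
    exact (ENNReal.ofReal_pos.mpr hC₂).ne' h2

lemma g_nonneg {p : ℝ} {l z : ℂ} (hl : ‖l‖ ≤ 1) :
    0 ≤ (1 - ‖l‖ ^ 2) ^ (p - 1) / ‖1 - (starRingEnd ℂ) l * z‖ ^ p := by
  apply div_nonneg
  · apply Real.rpow_nonneg
    nlinarith [norm_nonneg l]
  · exact Real.rpow_nonneg (norm_nonneg _) _

lemma g_le {p : ℝ} (hp : 1 < p) {l z : ℂ} (hl : ‖l‖ ≤ 1) (hz : ‖z‖ ≤ 1)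
    (hne : l ≠ z) :
    (1 - ‖l‖ ^ 2) ^ (p - 1) / ‖1 - (starRingEnd ℂ) l * z‖ ^ p
      ≤ 2 ^ (p - 1) * (‖z - l‖)⁻¹ := by
  set D := ‖1 - (starRingEnd ℂ) l * z‖ with hD
  set d := ‖z - l‖ with hd
  have hd0 : 0 < d := by
    rw [hd]
    exact norm_pos_iff.mpr (sub_ne_zero.mpr (Ne.symm hne))
  have hdD : d ≤ D := abs_sub_le_abs_one_sub_conj hl hz
  have hD0 : 0 < D := lt_of_lt_of_le hd0 hdD
  have hδD : 1 - ‖l‖ ≤ D := one_sub_abs_le_abs_one_sub_conj l hz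
  have hnum : (1 - ‖l‖ ^ 2) ^ (p - 1) ≤ 2 ^ (p - 1) * D ^ (p - 1) := by
    rw [← Real.mul_rpow (by norm_num) hD0.le]
    apply Real.rpow_le_rpow (by nlinarith [norm_nonneg l]) _ (by linarith)
    nlinarith [norm_nonneg l]
  have hden : D ^ (p - 1) * d ≤ D ^ p := by
    calc D ^ (p - 1) * d ≤ D ^ (p - 1) * D := by
          apply mul_le_mul_of_nonneg_left (le_trans hdD (le_refl D))
            (Real.rpow_nonneg hD0.le _)
      _ = D ^ p := by
          have hh : D ^ (p - 1) * D ^ (1:ℝ) = D ^ p := by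
            rw [← Real.rpow_add hD0, show p - 1 + 1 = p by ring]
          rwa [Real.rpow_one] at hh
  calc (1 - ‖l‖ ^ 2) ^ (p - 1) / D ^ p
      ≤ (2 ^ (p - 1) * D ^ (p - 1)) / (D ^ (p - 1) * d) :=
        div_le_div₀ (by positivity) hnum (by positivity) hden
    _ = 2 ^ (p - 1) * d⁻¹ := by
        rw [div_eq_mul_inv, mul_inv]
        have : D ^ (p-1) ≠ 0 := (Real.rpow_pos_of_pos hD0 _).ne'
        field_simp

lemma measurableSet_cArc {a ℓ : ℝ} (hℓ : ℓ ≤ 1) : MeasurableSet (cArc a ℓ) := by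
  apply MeasurableSet.image_of_continuousOn_injOn measurableSet_Ico
  · exact (Continuous.continuousOn (by fun_prop))
  · intro x hx y hy hxy
    rw [Complex.exp_eq_exp_iff_exists_int] at hxy
    obtain ⟨n, hn⟩ := hxy
    have hπ : (0:ℝ) < Real.pi := Real.pi_pos
    have hsub : x - y = n * (2 * Real.pi) := by
      have := congrArg Complex.im hn
      simp at this
      linarith
    have hxy1 : |x - y| < 2 * Real.pi := by
      rw [abs_sub_lt_iff]
      constructor <;> nlinarith [hx.1, hx.2, hy.1, hy.2]
    have hn1 : |(n:ℝ)| < 1 := by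
      have h2 : |(n:ℝ)| * (2 * Real.pi) < 2 * Real.pi := by
        calc |(n:ℝ)| * (2 * Real.pi)
            = |x - y| := by
              rw [hsub, abs_mul, _root_.abs_of_pos (by linarith : (0:ℝ) < 2 * Real.pi)]
          _ < 2 * Real.pi := hxy1
      nlinarith [abs_nonneg ((n:ℝ))]
    have hn0 : n = 0 := by
      have h3 : |n| < 1 := by exact_mod_cast hn1
      rcases abs_lt.mp h3 with ⟨h4, h5⟩
      omega
    rw [hn0] at hsub
    push_cast at hsub
    linarith

lemma measurableSet_cWindowH {a ℓ h : ℝ} (hℓ : ℓ ≤ 1) : MeasurableSet (cWindowH a ℓ h) := by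
  have habs : Measurable fun z : ℂ => ‖z‖ := continuous_norm.measurable
  have hdiv : Measurable fun z : ℂ => z / (‖z‖ : ℂ) :=
    measurable_id.div (Complex.measurable_ofReal.comp habs)
  have : cWindowH a ℓ h = (fun z : ℂ => ‖z‖) ⁻¹' (Icc (1-h) 1)
      ∩ (fun z : ℂ => z / (‖z‖ : ℂ)) ⁻¹' (cArc a ℓ) := by
    ext z; simp [cWindowH, and_assoc]
  rw [this]
  exact (habs measurableSet_Icc).inter (hdiv (measurableSet_cArc hℓ))

lemma finite_lint_inv_abs :
    ∫⁻ z in ball (0:ℂ) 3, ENNReal.ofReal ((‖z‖)⁻¹) ∂volume < ⊤ := by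
  have hm : AEMeasurable (fun z : ℂ => (‖z‖)⁻¹)
      (volume.restrict (ball (0:ℂ) 3)) :=
    (continuous_norm.measurable.inv).aemeasurable
  rw [lintegral_eq_lintegral_meas_le _ (Filter.Eventually.of_forall fun z => by positivity) hm]
  rw [← Ioc_union_Ioi_eq_Ioi (zero_le_one (α := ℝ)),
    lintegral_union measurableSet_Ioi (Ioc_disjoint_Ioi le_rfl)]
  have hB : volume (ball (0:ℂ) 3) < ⊤ := by
    rw [Complex.volume_ball]
    exact ENNReal.mul_lt_top (ENNReal.pow_lt_top ENNReal.ofReal_lt_top) ENNReal.coe_lt_top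
  have h1 : ∫⁻ t in Ioc (0:ℝ) 1, (volume.restrict (ball (0:ℂ) 3)) {a : ℂ | t ≤ (‖a‖)⁻¹}
      < ⊤ := by
    calc ∫⁻ t in Ioc (0:ℝ) 1, (volume.restrict (ball (0:ℂ) 3)) {a : ℂ | t ≤ (‖a‖)⁻¹}
        ≤ ∫⁻ _ in Ioc (0:ℝ) 1, volume (ball (0:ℂ) 3) := by
          apply lintegral_mono
          intro t
          exact le_trans (measure_mono (subset_univ _)) (le_of_eq (Measure.restrict_apply_univ _))
      _ = volume (ball (0:ℂ) 3) * volume (Ioc (0:ℝ) 1) := setLIntegral_const _ _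
      _ < ⊤ := ENNReal.mul_lt_top hB (by simp [Real.volume_Ioc])
  have h2 : ∫⁻ t in Ioi (1:ℝ), (volume.restrict (ball (0:ℂ) 3)) {a : ℂ | t ≤ (‖a‖)⁻¹}
      < ⊤ := by
    have hb : ∀ t ∈ Ioi (1:ℝ),
        (volume.restrict (ball (0:ℂ) 3)) {a : ℂ | t ≤ (‖a‖)⁻¹}
          ≤ ENNReal.ofReal (Real.pi * t ^ (-2:ℝ)) := by
      intro t ht
      have ht1 : (1:ℝ) < t := ht
      have ht0 : (0:ℝ) < t := by linarith
      have hsub2 : {a : ℂ | t ≤ (‖a‖)⁻¹} ⊆ closedBall (0:ℂ) t⁻¹ := by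
        intro a ha
        simp only [mem_setOf_eq] at ha
        rcases eq_or_ne a 0 with rfl | ha0
        · simp [mem_closedBall]; positivity
        · have habs : 0 < ‖a‖ := norm_pos_iff.mpr ha0
          rw [mem_closedBall_zero_iff]
          rw [le_inv_comm₀ ht0 habs] at ha
          exact ha
      calc (volume.restrict (ball (0:ℂ) 3)) {a : ℂ | t ≤ (‖a‖)⁻¹}
          ≤ volume (closedBall (0:ℂ) t⁻¹) :=
            le_trans (Measure.restrict_apply_le _ _) (measure_mono hsub2)
        _ = ENNReal.ofReal t⁻¹ ^ 2 * NNReal.pi := Complex.volume_closedBall _ _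
        _ = ENNReal.ofReal (Real.pi * t ^ (-2:ℝ)) := by
            rw [← ENNReal.ofReal_pow (by positivity), ← ENNReal.ofReal_coe_nnreal,
              NNReal.coe_real_pi, ← ENNReal.ofReal_mul (by positivity)]
            congr 1
            rw [Real.rpow_neg ht0.le,
              show (t:ℝ) ^ (2:ℝ) = t ^ 2 by rw [← Real.rpow_natCast t 2]; norm_num,
              inv_pow]
            ring
    calc ∫⁻ t in Ioi (1:ℝ), (volume.restrict (ball (0:ℂ) 3)) {a : ℂ | t ≤ (‖a‖)⁻¹}
        ≤ ∫⁻ t in Ioi (1:ℝ), ENNReal.ofReal (Real.pi * t ^ (-2:ℝ)) :=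
          setLIntegral_mono' measurableSet_Ioi hb
      _ < ⊤ := by
          apply IntegrableOn.setLIntegral_lt_top
          exact (integrableOn_Ioi_rpow_of_lt (by norm_num) one_pos).const_mul Real.pi
  exact ENNReal.add_lt_top.mpr ⟨h1, h2⟩

lemma integrableOn_inv_abs_sub {z : ℂ} (hz : ‖z‖ ≤ 1) :
    IntegrableOn (fun l : ℂ => (‖z - l‖)⁻¹) (closedBall (0:ℂ) 1) volume := by
  set G : ℂ → ℝ := fun w => (‖w‖)⁻¹ with hGdef
  have hGm : Measurable G := continuous_norm.measurable.inv
  set G2 : ℂ → ℝ := (ball (0:ℂ) 3).indicator G with hG2def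
  have hG2 : Integrable G2 volume := by
    rw [hG2def, integrable_indicator_iff measurableSet_ball]
    constructor
    · exact hGm.aestronglyMeasurable.restrict
    · rw [hasFiniteIntegral_iff_norm]
      calc ∫⁻ w in ball (0:ℂ) 3, ENNReal.ofReal ‖G w‖ ∂volume
          = ∫⁻ w in ball (0:ℂ) 3, ENNReal.ofReal ((‖w‖)⁻¹) ∂volume := by
            apply lintegral_congr
            intro w
            rw [hGdef, Real.norm_eq_abs, _root_.abs_of_nonneg (by positivity)]
        _ < ⊤ := finite_lint_inv_abs
  have hG2t : Integrable (fun l => G2 (l - z)) volume := hG2.comp_sub_right z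
  apply Integrable.mono' hG2t.restrict
  · apply Measurable.aestronglyMeasurable
    exact ((continuous_norm.comp (continuous_const.sub continuous_id)).measurable).inv
  · filter_upwards [ae_restrict_mem measurableSet_closedBall] with l hl
    have hmem : l - z ∈ ball (0:ℂ) 3 := by
      rw [mem_ball_zero_iff]
      have h1 : ‖l‖ ≤ 1 := by rwa [← mem_closedBall_zero_iff]
      have h2 : ‖z‖ ≤ 1 := by exact hz
      calc ‖l - z‖ ≤ ‖l‖ + ‖z‖ := norm_sub_le _ _
        _ < 3 := by linarith
    rw [Real.norm_eq_abs, _root_.abs_of_nonneg (by positivity), hG2def,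
      indicator_of_mem hmem, hGdef]
    simp only
    rw [norm_sub_rev]

lemma integrableOn_g {p : ℝ} (a ℓ h : ℝ) (hp : 1 < p) {z : ℂ} (hz : ‖z‖ ≤ 1) :
    IntegrableOn (fun l => (1 - ‖l‖ ^ 2) ^ (p - 1)
      / ‖1 - (starRingEnd ℂ) l * z‖ ^ p) (cWindowH a ℓ h) volume := by
  have hsub : cWindowH a ℓ h ⊆ closedBall (0:ℂ) 1 := fun w hw => by
    rw [mem_closedBall_zero_iff]
    exact hw.2.1
  apply IntegrableOn.mono_set _ hsub
  have hz0 : (volume.restrict (closedBall (0:ℂ) 1)) {z} = 0 := by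
    rw [Measure.restrict_apply (measurableSet_singleton z)]
    apply measure_mono_null (inter_subset_left)
    apply measure_mono_null (show ({z} : Set ℂ) ⊆ closedBall z 0 by simp)
    rw [Complex.volume_closedBall]
    simp
  have hne : ∀ᵐ (l : ℂ) ∂volume.restrict (closedBall (0:ℂ) 1), l ≠ z := by
    rw [ae_iff]
    simpa using hz0
  refine Integrable.mono' ((integrableOn_inv_abs_sub hz).const_mul ((2:ℝ)^(p-1))) ?_ ?_
  · apply Measurable.aestronglyMeasurable
    apply Measurable.div
    · exact (Continuous.rpow_const
        (continuous_const.sub (continuous_norm.pow 2))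
        (fun x => Or.inr (by linarith))).measurable
    · apply (Continuous.rpow_const _ (fun x => Or.inr (by linarith))).measurable
      exact continuous_norm.comp (continuous_const.sub ((Complex.continuous_conj).mul continuous_const))
  · filter_upwards [ae_restrict_mem measurableSet_closedBall, hne] with l hl hlz
    have hl1 : ‖l‖ ≤ 1 := by rwa [mem_closedBall_zero_iff] at hl
    rw [Real.norm_eq_abs, _root_.abs_of_nonneg (g_nonneg hl1)]
    exact g_le hp hl1 hz hlz

lemma volume_cWindowH_ge {a ℓ h : ℝ} (hℓ0 : 0 < ℓ) (hℓ1 : ℓ ≤ 1) (hh0 : 0 < h) (hh1 : h ≤ 1) :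
    ENNReal.ofReal (Real.pi * ℓ * h / 2) ≤ volume (cWindowH a ℓ h) := by
  have hπ : (0:ℝ) < Real.pi := Real.pi_pos
  set rect : Set (ℝ × ℝ) := Ioc (1-h) 1 ×ˢ Ioo (-(Real.pi*ℓ)) (Real.pi*ℓ) with hrect
  have hrectm : MeasurableSet rect := measurableSet_Ioc.prod measurableSet_Ioo
  have hrect_sub : rect ⊆ polarCoord.target := by
    rintro ⟨r, θ⟩ ⟨hr, hθ⟩
    simp only [polarCoord_target, mem_prod, mem_Ioi, mem_Ioo] at *
    refine ⟨lt_of_le_of_lt (by linarith) hr.1, by nlinarith [hθ.1], by nlinarith [hθ.2]⟩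
  have hinj : InjOn polarCoord.symm rect := polarCoord.symm.injOn.mono hrect_sub
  set F : Set (ℝ×ℝ) := polarCoord.symm '' rect with hF
  have hFm : MeasurableSet F := by
    apply MeasurableSet.image_of_continuousOn_injOn hrectm _ hinj
    have : polarCoord.symm.source = polarCoord.target := rfl
    exact polarCoord.symm.continuousOn.mono (by rw [this] at *; exact hrect_sub)
  -- Step 1: lower bound for the volume of F
  have hvolF : ENNReal.ofReal (Real.pi * ℓ * h / 2) ≤ volume F := by
    set B : ℝ × ℝ → ℝ × ℝ →L[ℝ] ℝ × ℝ := fun p =>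
      LinearMap.toContinuousLinearMap (Matrix.toLin (Module.Basis.finTwoProd ℝ) (Module.Basis.finTwoProd ℝ)
        !![Real.cos p.2, -p.1 * Real.sin p.2; Real.sin p.2, p.1 * Real.cos p.2]) with hB
    have hder : ∀ q ∈ rect, HasFDerivWithinAt polarCoord.symm (B q) rect q := fun q _ =>
      (hasFDerivAt_polarCoord_symm q).hasFDerivWithinAt
    have B_det : ∀ p, (B p).det = p.1 := by
      intro p
      conv_rhs => rw [← one_mul p.1, ← Real.cos_sq_add_sin_sq p.2]
      simp only [hB, neg_mul, LinearMap.det_toContinuousLinearMap, LinearMap.det_toLin,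
        Matrix.det_fin_two_of, sub_neg_eq_add]
      ring
    have hchange := lintegral_image_eq_lintegral_abs_det_fderiv_mul volume hrectm hder hinj
      (fun _ => (1:ENNReal))
    rw [setLIntegral_one] at hchange
    have hrad : ENNReal.ofReal (h/4) ≤ ∫⁻ r in Ioc (1-h) 1, ENNReal.ofReal r := by
      set m : ℝ := max (1-h) (1/2) with hm
      have hm1 : m ≤ 1 := max_le (by linarith) (by norm_num)
      have h1m : h/2 ≤ 1 - m := by
        rcases max_cases (1-h) (1/2) with ⟨heq, hge⟩ | ⟨heq, hlt⟩ <;> rw [hm, heq] <;> linarith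
      calc ENNReal.ofReal (h/4)
          ≤ ENNReal.ofReal (1/2) * ENNReal.ofReal (1 - m) := by
            rw [← ENNReal.ofReal_mul (by norm_num)]
            apply ENNReal.ofReal_le_ofReal; linarith
        _ = ENNReal.ofReal (1/2) * volume (Ioc m 1) := by rw [Real.volume_Ioc]
        _ = ∫⁻ _ in Ioc m 1, ENNReal.ofReal (1/2) := (setLIntegral_const _ _).symm
        _ ≤ ∫⁻ r in Ioc m 1, ENNReal.ofReal r := by
            apply setLIntegral_mono' measurableSet_Ioc
            intro r hr
            exact ENNReal.ofReal_le_ofReal (le_trans (le_max_right _ _) hr.1.le)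
        _ ≤ ∫⁻ r in Ioc (1-h) 1, ENNReal.ofReal r :=
            lintegral_mono_set (Ioc_subset_Ioc_left (le_max_left _ _))
    have hprod : ∫⁻ q in rect, ENNReal.ofReal q.1
        = (∫⁻ r in Ioc (1-h) 1, ENNReal.ofReal r)
          * ∫⁻ _ in Ioo (-(Real.pi*ℓ)) (Real.pi*ℓ), (1:ENNReal) := by
      rw [hrect, Measure.volume_eq_prod, ← Measure.prod_restrict]
      rw [← lintegral_prod_mul (μ := volume.restrict (Ioc (1-h) 1))
        (ν := volume.restrict (Ioo (-(Real.pi*ℓ)) (Real.pi*ℓ)))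
        (f := fun r => ENNReal.ofReal r) (g := fun _ => (1:ENNReal))
        ENNReal.measurable_ofReal.aemeasurable measurable_const.aemeasurable]
      simp
    have hpt : ∀ q ∈ rect, ENNReal.ofReal q.1 ≤ ENNReal.ofReal |(B q).det| * 1 := by
      rintro ⟨r, θ⟩ hq
      rw [B_det, mul_one]
      exact ENNReal.ofReal_le_ofReal (le_abs_self _)
    calc ENNReal.ofReal (Real.pi * ℓ * h / 2)
        = ENNReal.ofReal (h/4) * ENNReal.ofReal (Real.pi*ℓ - -(Real.pi*ℓ)) := by
          rw [← ENNReal.ofReal_mul (by positivity)]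
          congr 1; ring
      _ ≤ (∫⁻ r in Ioc (1-h) 1, ENNReal.ofReal r)
            * ∫⁻ _ in Ioo (-(Real.pi*ℓ)) (Real.pi*ℓ), (1:ENNReal) := by
          rw [setLIntegral_one, Real.volume_Ioo]
          exact mul_le_mul' hrad le_rfl
      _ = ∫⁻ q in rect, ENNReal.ofReal q.1 := hprod.symm
      _ ≤ ∫⁻ q in rect, ENNReal.ofReal |(B q).det| * 1 := setLIntegral_mono' hrectm hpt
      _ = volume F := hchange.symm
  -- Step 2: F corresponds to E in ℂ
  set E : Set ℂ := Complex.polarCoord.symm '' rect with hE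
  have hcomm : ∀ q : ℝ×ℝ, Complex.measurableEquivRealProd (Complex.polarCoord.symm q)
      = polarCoord.symm q := by
    intro q
    rw [Complex.polarCoord_symm_apply, Complex.measurableEquivRealProd_apply]
    simp [Complex.mul_re, Complex.mul_im, polarCoord, Complex.cos_ofReal_re, Complex.sin_ofReal_re]
  have hEF : E = Complex.measurableEquivRealProd ⁻¹' F := by
    rw [hE, hF]
    ext z
    constructor
    · rintro ⟨q, hq, rfl⟩
      exact ⟨q, hq, (hcomm q).symm⟩
    · rintro ⟨q, hq, hzq⟩
      refine ⟨q, hq, ?_⟩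
      have := hcomm q
      rw [hzq] at this
      exact Complex.measurableEquivRealProd.injective this
  have hvolE : volume E = volume F := by
    rw [hEF]
    exact Complex.volume_preserving_equiv_real_prod.measure_preimage hFm.nullMeasurableSet
  -- Step 3: rotate E into the window
  set c : ℝ := a + Real.pi * ℓ with hc
  have hrot_sub : (⇑(rotation (Circle.exp c))) '' E ⊆ cWindowH a ℓ h := by
    rintro - ⟨-, ⟨⟨r, θ⟩, hq, rfl⟩, rfl⟩
    obtain ⟨hr, hθ⟩ := hq
    rw [mem_Ioc] at hr
    rw [mem_Ioo] at hθ
    have hr0 : 0 < r := lt_of_le_of_lt (by linarith) hr.1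
    have hzval : (rotation (Circle.exp c)) (Complex.polarCoord.symm (r, θ))
        = (r:ℂ) * Complex.exp ((((c + θ) : ℝ) :ℂ) * Complex.I) := by
      rw [rotation_apply, Complex.polarCoord_symm_apply, Circle.coe_exp]
      simp only
      rw [Complex.ofReal_cos, Complex.ofReal_sin, ← Complex.exp_mul_I,
        show (((c + θ : ℝ)):ℂ) * Complex.I = (c:ℂ) * Complex.I + (θ:ℂ) * Complex.I by
          push_cast; ring,
        Complex.exp_add]
      ring
    rw [hzval]
    have habs : ‖(r:ℂ) * Complex.exp ((((c + θ) : ℝ) :ℂ) * Complex.I)‖ = r := by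
      rw [norm_mul, Complex.norm_exp_ofReal_mul_I, Complex.norm_real, Real.norm_eq_abs, mul_one,
        _root_.abs_of_pos hr0]
    refine ⟨by rw [habs]; exact hr.1.le, by rw [habs]; exact hr.2, ?_⟩
    rw [habs]
    have hdiv : (r:ℂ) * Complex.exp ((((c + θ) : ℝ) :ℂ) * Complex.I) / ((r:ℝ):ℂ)
        = Complex.exp ((((c + θ) : ℝ) :ℂ) * Complex.I) := by
      rw [mul_comm, mul_div_assoc, div_self (by exact_mod_cast hr0.ne'), mul_one]
    rw [hdiv]
    exact ⟨c + θ, ⟨by rw [hc]; linarith [hθ.1], by rw [hc]; linarith [hθ.2]⟩, rfl⟩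
  have hEm : MeasurableSet E := by
    rw [hEF]
    exact Complex.measurableEquivRealProd.measurable hFm
  have hvrot : volume ((⇑(rotation (Circle.exp c))) '' E) = volume E := by
    have h1 : (⇑(rotation (Circle.exp c))) '' E = (rotation (Circle.exp c)).symm ⁻¹' E := by
      ext w
      simp only [mem_image, mem_preimage]
      constructor
      · rintro ⟨x, hx, rfl⟩
        rwa [LinearIsometryEquiv.symm_apply_apply]
      · intro hw
        exact ⟨(rotation (Circle.exp c)).symm w, hw, LinearIsometryEquiv.apply_symm_apply _ _⟩
    rw [h1]
    exact (rotation (Circle.exp c)).symm.measurePreserving.measure_preimage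
      hEm.nullMeasurableSet
  calc ENNReal.ofReal (Real.pi * ℓ * h / 2) ≤ volume F := hvolF
    _ = volume E := hvolE.symm
    _ = volume ((⇑(rotation (Circle.exp c))) '' E) := hvrot.symm
    _ ≤ volume (cWindowH a ℓ h) := measure_mono hrot_sub

end auxlemmas

/-- If the reverse inequality holds on normalized reproducing kernels, then
`∫ φ_h dμ ≳ |I|` uniformly over arcs `I` and `0 < h ≤ |I|`. -/
theorem phi_integral_lower_bound (p : ℝ) (hp : 1 < p)
    (μ : Measure ℂ) [IsFiniteMeasure μ] (hsupp : μ (closedBall (0:ℂ) 1)ᶜ = 0)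
    (C₂ : ℝ) (hC₂ : 0 < C₂)
    (hker : ∀ l ∈ ball (0:ℂ) 1,
      ENNReal.ofReal C₂ ≤ ∫⁻ z, ENNReal.ofReal (‖hkerN p l z‖ ^ p) ∂μ) :
    ∃ c > (0:ℝ), ∀ a ℓ h : ℝ, 0 < ℓ → ℓ ≤ 1 → 0 < h → h ≤ ℓ →
      ENNReal.ofReal (c * ℓ) ≤ ∫⁻ z, ENNReal.ofReal (cPhi p a ℓ h z) ∂μ := by
  have hπ : (0:ℝ) < Real.pi := Real.pi_pos
  set cp0 : ℝ := (2*Real.pi)⁻¹ * (4:ℝ)^(-p) with hcp0def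
  have h4p : (0:ℝ) < (4:ℝ)^(-p) := Real.rpow_pos_of_pos (by norm_num) _
  have hcp0 : 0 < cp0 := by rw [hcp0def]; positivity
  refine ⟨C₂ * cp0 * (Real.pi/2), by positivity, fun a ℓ h hℓ0 hℓ1 hh0 hhℓ => ?_⟩
  have hh1 : h ≤ 1 := hhℓ.trans hℓ1
  have hSm : MeasurableSet (cWindowH a ℓ h) := measurableSet_cWindowH hℓ1
  have hz_ae : ∀ᵐ z ∂μ, z ∈ closedBall (0:ℂ) 1 := by
    rw [MeasureTheory.ae_iff]
    exact hsupp
  have key1 : ∀ᵐ z ∂μ, ENNReal.ofReal (cPhi p a ℓ h z)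
      = ENNReal.ofReal (1/h) * ∫⁻ l in cWindowH a ℓ h, ENNReal.ofReal
        ((1 - ‖l‖ ^ 2) ^ (p - 1) / ‖1 - (starRingEnd ℂ) l * z‖ ^ p) ∂volume := by
    filter_upwards [hz_ae] with z hz
    have hz1 : ‖z‖ ≤ 1 := by rwa [mem_closedBall_zero_iff] at hz
    rw [cPhi, ENNReal.ofReal_mul (by positivity)]
    congr 1
    rw [ofReal_integral_eq_lintegral_ofReal (integrableOn_g a ℓ h hp hz1) ?_]
    filter_upwards [ae_restrict_mem hSm] with l hl using g_nonneg hl.2.1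
  have hmeas : Measurable (Function.uncurry fun (z : ℂ) (l : ℂ) => ENNReal.ofReal
      ((1 - ‖l‖ ^ 2) ^ (p - 1) / ‖1 - (starRingEnd ℂ) l * z‖ ^ p)) := by
    apply ENNReal.measurable_ofReal.comp
    apply Measurable.div
    · exact (Continuous.rpow_const
        (continuous_const.sub ((continuous_norm.comp continuous_snd).pow 2))
        (fun _ => Or.inr (by linarith))).measurable
    · exact (Continuous.rpow_const
        (continuous_norm.comp (continuous_const.sub
          ((Complex.continuous_conj.comp continuous_snd).mul continuous_fst)))
        (fun _ => Or.inr (by linarith))).measurable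
  have hsph : ∀ᵐ l : ℂ ∂volume, ‖l‖ ≠ 1 := by
    have h0 : volume (sphere (0:ℂ) 1) = 0 := Measure.addHaar_sphere (μ := volume) 0 1
    rw [ae_iff]
    convert h0 using 2
    ext l
    simp [mem_sphere_zero_iff_norm]
  have key3 : ∀ᵐ l ∂(volume.restrict (cWindowH a ℓ h)), ENNReal.ofReal (C₂ * cp0)
      ≤ ∫⁻ z, ENNReal.ofReal ((1 - ‖l‖ ^ 2) ^ (p - 1)
          / ‖1 - (starRingEnd ℂ) l * z‖ ^ p) ∂μ := by
    filter_upwards [ae_restrict_mem hSm, (ae_mono Measure.restrict_le_self) hsph] with l hlS hl1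
    have hl_lt : ‖l‖ < 1 := lt_of_le_of_ne hlS.2.1 hl1
    have hal0 : (0:ℝ) ≤ ‖l‖ := norm_nonneg l
    have hδ : (0:ℝ) < 1 - ‖l‖ := by linarith
    have hnum_nn : (0:ℝ) ≤ 1 - ‖l‖ ^ 2 := by nlinarith
    have hpt : ∀ z : ℂ, ENNReal.ofReal ((1 - ‖l‖ ^ 2) ^ (p - 1)
        / ‖1 - (starRingEnd ℂ) l * z‖ ^ p)
        = ENNReal.ofReal ((1 - ‖l‖ ^ 2) ^ (p - 1)) * ENNReal.ofReal (‖_root_.hker l z‖ ^ p) := by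
      intro z
      rw [← ENNReal.ofReal_mul (Real.rpow_nonneg hnum_nn _)]
      congr 1
      rw [norm_hker, Real.inv_rpow (norm_nonneg _), div_eq_mul_inv]
    have hmul : (∫⁻ z, ENNReal.ofReal ((1 - ‖l‖ ^ 2) ^ (p - 1)
          / ‖1 - (starRingEnd ℂ) l * z‖ ^ p) ∂μ)
        = ENNReal.ofReal ((1 - ‖l‖ ^ 2) ^ (p - 1))
            * ∫⁻ z, ENNReal.ofReal (‖_root_.hker l z‖ ^ p) ∂μ := by
      rw [← lintegral_const_mul' _ _ ENNReal.ofReal_ne_top]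
      exact lintegral_congr (fun z => hpt z)
    rw [hmul]
    have hkey : (1 - ‖l‖ ^ 2) ^ (p - 1) * (1 - ‖l‖) ^ (1 - p)
        = (1 + ‖l‖) ^ (p - 1) := by
      rw [show (1 : ℝ) - ‖l‖ ^ 2
          = (1 - ‖l‖) * (1 + ‖l‖) by ring,
        Real.mul_rpow hδ.le (by linarith)]
      rw [mul_comm ((1 - ‖l‖) ^ (p-1)) _, mul_assoc, ← Real.rpow_add hδ,
        show p - 1 + (1 - p) = 0 by ring, Real.rpow_zero, mul_one]
    have h1 : (1:ℝ) ≤ (1 + ‖l‖) ^ (p - 1) :=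
      Real.one_le_rpow (by linarith) (by linarith)
    calc ENNReal.ofReal (C₂ * cp0)
        ≤ ENNReal.ofReal ((1 - ‖l‖ ^ 2) ^ (p - 1)
            * (C₂ * (cp0 * (1 - ‖l‖) ^ (1 - p)))) := by
          apply ENNReal.ofReal_le_ofReal
          calc C₂ * cp0 = 1 * (C₂ * cp0) := (one_mul _).symm
            _ ≤ (1 + ‖l‖) ^ (p-1) * (C₂ * cp0) :=
                mul_le_mul_of_nonneg_right h1 (by positivity)
            _ = (1 - ‖l‖ ^ 2) ^ (p - 1)
                * (C₂ * (cp0 * (1 - ‖l‖) ^ (1 - p))) := by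
                rw [← hkey]; ring
      _ = ENNReal.ofReal ((1 - ‖l‖ ^ 2) ^ (p-1))
            * ENNReal.ofReal (C₂ * (cp0 * (1 - ‖l‖) ^ (1-p))) :=
          ENNReal.ofReal_mul (Real.rpow_nonneg hnum_nn _)
      _ ≤ ENNReal.ofReal ((1 - ‖l‖ ^ 2) ^ (p-1))
            * ∫⁻ z, ENNReal.ofReal (‖_root_.hker l z‖ ^ p) ∂μ := by
          apply mul_le_mul_right
          have hh := lintegral_hker_ge hp μ hC₂ hker hl_lt
          rw [← hcp0def] at hh
          rwa [show cp0 * (1 - ‖l‖) ^ (1 - p)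
            = cp0 * (1 - ‖l‖) ^ (1-p) from rfl] at hh
  calc ENNReal.ofReal (C₂ * cp0 * (Real.pi/2) * ℓ)
      = ENNReal.ofReal (1/h) * ENNReal.ofReal ((C₂ * cp0) * (Real.pi * ℓ * h / 2)) := by
        rw [← ENNReal.ofReal_mul (by positivity)]
        congr 1
        field_simp
    _ = ENNReal.ofReal (1/h)
          * (ENNReal.ofReal (C₂ * cp0) * ENNReal.ofReal (Real.pi * ℓ * h / 2)) := by
        rw [ENNReal.ofReal_mul (by positivity)]
    _ ≤ ENNReal.ofReal (1/h)
          * (ENNReal.ofReal (C₂ * cp0) * volume (cWindowH a ℓ h)) :=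
        mul_le_mul_right (mul_le_mul_right (volume_cWindowH_ge hℓ0 hℓ1 hh0 hh1) _) _
    _ = ENNReal.ofReal (1/h) * ∫⁻ _ in cWindowH a ℓ h, ENNReal.ofReal (C₂ * cp0) ∂volume := by
        rw [setLIntegral_const]
    _ ≤ ENNReal.ofReal (1/h) * ∫⁻ l in cWindowH a ℓ h,
          (∫⁻ z, ENNReal.ofReal ((1 - ‖l‖ ^ 2) ^ (p - 1)
            / ‖1 - (starRingEnd ℂ) l * z‖ ^ p) ∂μ) ∂volume :=
        mul_le_mul_right (lintegral_mono_ae key3) _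
    _ = ENNReal.ofReal (1/h) * ∫⁻ z, (∫⁻ l in cWindowH a ℓ h,
          ENNReal.ofReal ((1 - ‖l‖ ^ 2) ^ (p - 1)
            / ‖1 - (starRingEnd ℂ) l * z‖ ^ p) ∂volume) ∂μ := by
        rw [← lintegral_lintegral_swap hmeas.aemeasurable]
    _ = ∫⁻ z, ENNReal.ofReal (1/h) * (∫⁻ l in cWindowH a ℓ h,
          ENNReal.ofReal ((1 - ‖l‖ ^ 2) ^ (p - 1)
            / ‖1 - (starRingEnd ℂ) l * z‖ ^ p) ∂volume) ∂μ := by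
        rw [lintegral_const_mul' _ _ ENNReal.ofReal_ne_top]
    _ = ∫⁻ z, ENNReal.ofReal (cPhi p a ℓ h z) ∂μ := by
        apply lintegral_congr_ae
        filter_upwards [key1] with z hz using hz.symm
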